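/- arXiv:2602.03799 — 2 statements merged into one kernel-verified Lean document; each statement's English description precedes it below -/
import Mathlib

section
/- Let S be a measurable space and ρ a probability measure on S. Let α, δ ∈ (0,1), and let p : S → ℝ be a measurable function with 0 ≤ p(s) ≤ 1 for all s (interpreted as the probability that the K-step trajectory started at s remains safe). Let V ⊆ S be a measurable set such that p(s) ≥ 1 − α for every s ∈ V (the trajectory-level conformal safety guarantee on verified states). Let X₁,…,X_N be i.i.d. random elements of S with law ρ, defined on a probability space (Ω, P), and let V̂ = (1/N)·#{i : Xᵢ ∈ V} be the empirical fraction of verified samples. Then P( ∫ p dρ ≥ ( V̂ − √( (1/(2N)) · log(2/δ) ) ) · (1 − α) ) ≥ 1 − δ. (This is the rigorous high-probability form of the paper's Theorem 1, whose proof combines ∫ p dρ ≥ (1−α)·ρ(V) with Hoeffding's inequality for the empirical frequency of V.) -/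
open MeasureTheory ProbabilityTheory

open Real in
/-- Hoeffding's lemma for a Bernoulli(q) variable: mgf bound. -/
lemma bern_mgf_le (q : ℝ) (hq0 : 0 ≤ q) (hq1 : q ≤ 1) (t : ℝ) (ht : 0 ≤ t) :
    1 - q + q * Real.exp t ≤ Real.exp (q * t + t ^ 2 / 8) := by
  set D : ℝ → ℝ := fun x => 1 - q + q * Real.exp x with hDdef
  have hD : ∀ x, 0 < D x := by
    intro x
    rcases eq_or_lt_of_le hq0 with h | h
    · simp [hDdef, ← h]
    · have h1 : 0 ≤ 1 - q := by linarith
      have h2 : 0 < q * Real.exp x := mul_pos h (Real.exp_pos x)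
      simp only [hDdef]; linarith
  set g : ℝ → ℝ := fun x => q * x + x ^ 2 / 8 - Real.log (D x) with hgdef
  set g1 : ℝ → ℝ := fun x => q + x / 4 - q * Real.exp x / D x with hg1def
  have hDder : ∀ x, HasDerivAt D (q * Real.exp x) x := fun x =>
    ((Real.hasDerivAt_exp x).const_mul q).const_add (1 - q)
  have hgder : ∀ x, HasDerivAt g (g1 x) x := by
    intro x
    have h1 : HasDerivAt (fun y : ℝ => q * y) (q * 1) x := (hasDerivAt_id x).const_mul q
    have h2 : HasDerivAt (fun y : ℝ => y ^ 2 / 8) (2 * x ^ 1 / 8) x :=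
      (hasDerivAt_pow 2 x).div_const 8
    have h3 : HasDerivAt (fun y => Real.log (D y)) (q * Real.exp x / D x) x :=
      (hDder x).log (hD x).ne'
    have := (h1.add h2).sub h3
    refine this.congr_deriv ?_
    simp [hg1def]; ring
  have hg1der : ∀ x, HasDerivAt g1 (1 / 4 - q * Real.exp x * (1 - q) / (D x) ^ 2) x := by
    intro x
    have h1 : HasDerivAt (fun y : ℝ => q + y / 4) (1 / 4) x :=
      ((hasDerivAt_id x).div_const 4).const_add q
    have h2 : HasDerivAt (fun y => q * Real.exp y / D y)
        ((q * Real.exp x * D x - q * Real.exp x * (q * Real.exp x)) / (D x) ^ 2) x :=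
      ((Real.hasDerivAt_exp x).const_mul q).div (hDder x) (hD x).ne'
    have := h1.sub h2
    refine this.congr_deriv ?_
    have hD2 : (D x) ^ 2 ≠ 0 := pow_ne_zero 2 (hD x).ne'
    field_simp [hDdef]
    ring
  have hg1nonneg : ∀ x, 0 ≤ x → 0 ≤ g1 x := by
    intro x hx
    have hmono : Monotone g1 := by
      apply monotone_of_deriv_nonneg (fun y => (hg1der y).differentiableAt)
      intro y
      rw [(hg1der y).deriv]
      have hD2 : (0:ℝ) < (D y) ^ 2 := pow_pos (hD y) 2
      rw [sub_nonneg, div_le_iff₀ hD2]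
      have he := Real.exp_pos y
      have key : 0 ≤ ((1 - q) - q * Real.exp y) ^ 2 := sq_nonneg _
      simp only [hDdef]
      nlinarith
    have hg10 : g1 0 = 0 := by
      simp [hg1def, hDdef]
    calc (0:ℝ) = g1 0 := hg10.symm
      _ ≤ g1 x := hmono hx
  have hgmono : MonotoneOn g (Set.Ici 0) := by
    apply monotoneOn_of_deriv_nonneg (convex_Ici 0)
    · exact (Differentiable.continuous fun y => (hgder y).differentiableAt).continuousOn
    · exact fun y _ => ((hgder y).differentiableAt).differentiableWithinAt
    · intro y hy
      rw [(hgder y).deriv]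
      exact hg1nonneg y (le_of_lt (by simpa using hy))
  have hg0 : g 0 = 0 := by simp [hgdef, hDdef]
  have := hgmono (Set.self_mem_Ici) (Set.mem_Ici.mpr ht) ht
  rw [hg0] at this
  have hlog : Real.log (D t) ≤ q * t + t ^ 2 / 8 := by
    simp only [hgdef] at this; linarith
  exact (Real.log_le_iff_le_exp (hD t)).mp hlog

/-- Theorem 1 of the paper (rigorous high-probability form): if `p s` is the probability
that the trajectory started at `s` is safe, `p ≥ 1 - α` on the verified set `V`, and
`X₁, …, X_N` are i.i.d. samples from the initial-state distribution `ρ`, then with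
probability at least `1 - δ` the overall safety probability `∫ p dρ` is at least
`(V̂ - √(log(2/δ)/(2N))) · (1 - α)`, where `V̂` is the empirical fraction of verified samples. -/
theorem stmt0 {S : Type*} [mS : MeasurableSpace S] (ρ : Measure S) [IsProbabilityMeasure ρ]
    {Ω : Type*} [MeasurableSpace Ω] (P : Measure Ω) [IsProbabilityMeasure P]
    (α δ : ℝ) (hα : α ∈ Set.Ioo (0:ℝ) 1) (hδ : δ ∈ Set.Ioo (0:ℝ) 1)
    (p : S → ℝ) (hpm : Measurable p) (hp0 : ∀ s, 0 ≤ p s) (hp1 : ∀ s, p s ≤ 1)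
    (V : Set S) (hV : MeasurableSet V) (hpV : ∀ s ∈ V, 1 - α ≤ p s)
    (N : ℕ) (hN : 0 < N)
    (X : Fin N → Ω → S) (hXm : ∀ i, Measurable (X i))
    (hXd : ∀ i, Measure.map (X i) P = ρ)
    (hXi : iIndepFun X P) :
    ENNReal.ofReal (1 - δ) ≤
      P {ω | ((N : ℝ)⁻¹ * ∑ i : Fin N, V.indicator (fun _ => (1 : ℝ)) (X i ω)
              - Real.sqrt ((1 / (2 * (N : ℝ))) * Real.log (2 / δ))) * (1 - α)
            ≤ ∫ s, p s ∂ρ} := by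
  obtain ⟨hα0, hα1⟩ := hα
  obtain ⟨hδ0, hδ1⟩ := hδ
  have hNR : (0:ℝ) < (N:ℝ) := Nat.cast_pos.mpr hN
  set q : ℝ := (ρ V).toReal with hqdef
  have hq0 : 0 ≤ q := ENNReal.toReal_nonneg
  have hq1 : q ≤ 1 := by
    rw [hqdef]
    exact ENNReal.toReal_le_of_le_ofReal one_pos.le (by simpa using prob_le_one (μ := ρ) (s := V))
  -- the ε and t
  have hlogpos : 0 ≤ Real.log (2 / δ) := by
    apply Real.log_nonneg
    rw [le_div_iff₀ hδ0]; linarith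
  set ε : ℝ := Real.sqrt ((1 / (2 * (N:ℝ))) * Real.log (2 / δ)) with hεdef
  have hε0 : 0 ≤ ε := Real.sqrt_nonneg _
  have hεsq : ε ^ 2 = (1 / (2 * (N:ℝ))) * Real.log (2 / δ) := by
    rw [hεdef, Real.sq_sqrt]
    positivity
  set t : ℝ := 4 * ε with htdef
  have ht0 : 0 ≤ t := by positivity
  -- the Bernoulli variables
  set Y : Fin N → Ω → ℝ := fun i ω => V.indicator (fun _ => (1:ℝ)) (X i ω) with hYdef
  have hIndMeas : Measurable (V.indicator (fun _ => (1:ℝ))) :=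
    measurable_const.indicator hV
  have hYm : ∀ i, Measurable (Y i) := fun i => hIndMeas.comp (hXm i)
  have hYindep : iIndepFun Y P :=
    hXi.comp (fun _ => V.indicator (fun _ => (1:ℝ))) (fun _ => hIndMeas)
  have hY0 : ∀ i ω, 0 ≤ Y i ω := by
    intro i ω; exact Set.indicator_nonneg (fun _ _ => zero_le_one) _
  have hY1 : ∀ i ω, Y i ω ≤ 1 := by
    intro i ω
    by_cases h : X i ω ∈ V <;> simp [hYdef, Set.indicator_of_mem, Set.indicator_of_notMem, h]
  -- mgf of each Y i
  have hmgf_i : ∀ i, mgf (Y i) P t = 1 - q + q * Real.exp t := by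
    intro i
    have hmeas_exp : Measurable fun s => Real.exp (t * V.indicator (fun _ => (1:ℝ)) s) :=
      (hIndMeas.const_mul t).exp
    rw [mgf]
    have hmap : ∫ ω, Real.exp (t * Y i ω) ∂P
        = ∫ s, Real.exp (t * V.indicator (fun _ => (1:ℝ)) s) ∂ρ := by
      rw [← hXd i, integral_map (hXm i).aemeasurable hmeas_exp.aestronglyMeasurable]
    rw [hmap]
    have hfun : (fun s => Real.exp (t * V.indicator (fun _ => (1:ℝ)) s))
        = fun s => V.indicator (fun _ => Real.exp t - 1) s + 1 := by
      funext s
      by_cases hs : s ∈ V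
      · simp [Set.indicator_of_mem hs]
      · simp [Set.indicator_of_notMem hs]
    rw [hfun, integral_add ((integrable_const _).indicator hV) (integrable_const _),
      integral_indicator_const _ hV]
    simp [smul_eq_mul, Measure.real, ← hqdef]
    ring
  -- sum
  have hSmeas : Measurable (∑ i : Fin N, Y i) := by
    have heq : (∑ i : Fin N, Y i) = fun ω => ∑ i : Fin N, Y i ω := by
      funext ω; simp [Finset.sum_apply]
    rw [heq]
    exact Finset.measurable_sum Finset.univ fun i _ => hYm i
  have hSbound : ∀ ω, (∑ i : Fin N, Y i) ω ≤ N := by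
    intro ω
    rw [Finset.sum_apply]
    calc ∑ i : Fin N, Y i ω ≤ ∑ _i : Fin N, (1:ℝ) := Finset.sum_le_sum fun i _ => hY1 i ω
      _ = N := by simp
  have hint : Integrable (fun ω => Real.exp (t * (∑ i : Fin N, Y i) ω)) P := by
    apply (integrable_const (Real.exp (t * N))).mono'
      ((hSmeas.const_mul t).exp.aestronglyMeasurable)
    filter_upwards with ω
    rw [Real.norm_eq_abs, abs_of_pos (Real.exp_pos _), Real.exp_le_exp]
    exact mul_le_mul_of_nonneg_left (hSbound ω) ht0
  -- Chernoff
  have hcher := measure_ge_le_exp_mul_mgf (μ := P) (X := ∑ i : Fin N, Y i)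
    ((N:ℝ) * (q + ε)) ht0 hint
  have hmgfsum : mgf (∑ i : Fin N, Y i) P t = (1 - q + q * Real.exp t) ^ N := by
    rw [hYindep.mgf_sum hYm Finset.univ]
    simp [hmgf_i]
  have hbernpos : (0:ℝ) ≤ 1 - q + q * Real.exp t := by nlinarith [Real.exp_pos t]
  have hmgfle : mgf (∑ i : Fin N, Y i) P t ≤ Real.exp ((N:ℝ) * (q * t + t ^ 2 / 8)) := by
    rw [hmgfsum]
    calc (1 - q + q * Real.exp t) ^ N ≤ (Real.exp (q * t + t ^ 2 / 8)) ^ N := by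
          exact pow_le_pow_left₀ hbernpos (bern_mgf_le q hq0 hq1 t ht0) N
      _ = Real.exp ((N:ℝ) * (q * t + t ^ 2 / 8)) := by
          rw [← Real.exp_nat_mul]
  have hkey : (P {ω | (N:ℝ) * (q + ε) ≤ (∑ i : Fin N, Y i) ω}).toReal ≤ δ / 2 := by
    refine hcher.trans ?_
    calc Real.exp (-t * ((N:ℝ) * (q + ε))) * mgf (∑ i : Fin N, Y i) P t
        ≤ Real.exp (-t * ((N:ℝ) * (q + ε))) * Real.exp ((N:ℝ) * (q * t + t ^ 2 / 8)) := by
          exact mul_le_mul_of_nonneg_left hmgfle (Real.exp_pos _).le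
      _ = Real.exp (-(2 * (N:ℝ) * ε ^ 2)) := by
          rw [← Real.exp_add]; congr 1; rw [htdef]; ring
      _ = δ / 2 := by
          have : 2 * (N:ℝ) * ε ^ 2 = Real.log (2 / δ) := by
            rw [hεsq]; field_simp
          rw [this, ← Real.log_inv, Real.exp_log (by positivity)]
          rw [inv_div]
  -- the bad set
  set B : Set Ω := {ω | (N:ℝ) * (q + ε) ≤ (∑ i : Fin N, Y i) ω} with hBdef
  have hBmeas : MeasurableSet B := measurableSet_le measurable_const hSmeas
  have hPB : P B ≤ ENNReal.ofReal (δ / 2) := by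
    rw [← ENNReal.ofReal_toReal (measure_ne_top P B)]
    exact ENNReal.ofReal_le_ofReal hkey
  -- integral lower bound
  have hpint : Integrable p ρ := by
    apply (integrable_const (1:ℝ)).mono' hpm.aestronglyMeasurable
    filter_upwards with s
    rw [Real.norm_eq_abs, abs_le]; exact ⟨by linarith [hp0 s], hp1 s⟩
  have hintLB : (1 - α) * q ≤ ∫ s, p s ∂ρ := by
    have hmono : ∫ s, V.indicator (fun _ => (1 - α)) s ∂ρ ≤ ∫ s, p s ∂ρ := by
      apply integral_mono ((integrable_const _).indicator hV) hpint
      intro s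
      by_cases hs : s ∈ V
      · rw [Set.indicator_of_mem hs]; exact hpV s hs
      · rw [Set.indicator_of_notMem hs]; exact hp0 s
    rwa [integral_indicator_const _ hV, smul_eq_mul, Measure.real, ← hqdef, mul_comm] at hmono
  -- complement inclusion
  have hsub : Bᶜ ⊆ {ω | ((N : ℝ)⁻¹ * ∑ i : Fin N, V.indicator (fun _ => (1 : ℝ)) (X i ω)
              - ε) * (1 - α) ≤ ∫ s, p s ∂ρ} := by
    intro ω hω
    simp only [hBdef, Set.mem_compl_iff, Set.mem_setOf_eq, not_le] at hω
    rw [Finset.sum_apply] at hω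
    have hVhat : (N:ℝ)⁻¹ * ∑ i : Fin N, Y i ω - ε ≤ q := by
      rw [sub_le_iff_le_add, inv_mul_le_iff₀ hNR]
      nlinarith
    simp only [Set.mem_setOf_eq]
    calc ((N : ℝ)⁻¹ * ∑ i : Fin N, V.indicator (fun _ => (1 : ℝ)) (X i ω) - ε) * (1 - α)
        ≤ q * (1 - α) := by
          apply mul_le_mul_of_nonneg_right _ (by linarith)
          exact hVhat
      _ = (1 - α) * q := by ring
      _ ≤ ∫ s, p s ∂ρ := hintLB
  -- finish
  calc ENNReal.ofReal (1 - δ) ≤ 1 - ENNReal.ofReal (δ / 2) := by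
        apply ENNReal.le_sub_of_add_le_right ENNReal.ofReal_ne_top
        rw [← ENNReal.ofReal_add (by linarith) (by linarith), ← ENNReal.ofReal_one]
        exact ENNReal.ofReal_le_ofReal (by linarith)
    _ ≤ 1 - P B := by
        exact tsub_le_tsub_left hPB 1
    _ = P Bᶜ := (prob_compl_eq_one_sub hBmeas).symm
    _ ≤ _ := measure_mono hsub
end

section
/- Let Z₁,…,Z_n, Z_{n+1} be i.i.d. real-valued random variables (nonconformity scores) on a probability space (Ω, P). Let α ∈ (0,1) with ⌈(n+1)(1−α)⌉ ≤ n, and let q̂ denote the ⌈(n+1)(1−α)⌉-th smallest value among Z₁,…,Z_n. Then P( Z_{n+1} ≤ q̂ ) ≥ 1 − α. -/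
open MeasureTheory ProbabilityTheory
open scoped Classical

/-- The `k`-th smallest value (order statistic of rank `k`, with `1 ≤ k ≤ n`) of the
finite family `f : Fin n → ℝ`: the infimum of the set of `x` such that at least `k`
of the values `f i` are `≤ x`. -/
noncomputable def kthSmallest (n : ℕ) (f : Fin n → ℝ) (k : ℕ) : ℝ :=
  sInf {x : ℝ | k ≤ (Finset.univ.filter (fun i => f i ≤ x)).card}

/-- Deterministic lemma: if fewer than `k` calibration scores are strictly below `z`,
then `z` is at most the `k`-th smallest. -/
lemma le_kthSmallest_of_count_lt {n k : ℕ} (hn : 0 < n) (hk : k ≤ n)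
    (f : Fin n → ℝ) (z : ℝ)
    (h : (Finset.univ.filter (fun i => f i < z)).card < k) :
    z ≤ kthSmallest n f k := by
  apply le_csInf
  · have hne : (Finset.univ : Finset (Fin n)).Nonempty :=
      ⟨⟨0, hn⟩, Finset.mem_univ _⟩
    refine ⟨Finset.univ.sup' hne f, ?_⟩
    have : Finset.univ.filter (fun i => f i ≤ Finset.univ.sup' hne f) = Finset.univ := by
      apply Finset.filter_true_of_mem
      intro i _
      exact Finset.le_sup' f (Finset.mem_univ i)
    simp only [Set.mem_setOf_eq, this, Finset.card_univ, Fintype.card_fin]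
    exact hk
  · intro x hx
    simp only [Set.mem_setOf_eq] at hx
    have hlt : (Finset.univ.filter (fun i => f i < z)).card <
        (Finset.univ.filter (fun i => f i ≤ x)).card := lt_of_lt_of_le h hx
    have hns : ¬ (Finset.univ.filter (fun i => f i ≤ x)) ⊆
        (Finset.univ.filter (fun i => f i < z)) := by
      intro hsub
      exact absurd (Finset.card_le_card hsub) (not_le.mpr hlt)
    obtain ⟨i, hi1, hi2⟩ := Finset.not_subset.mp hns
    simp only [Finset.mem_filter, Finset.mem_univ, true_and, not_lt] at hi1 hi2
    linarith

/-- Pointwise counting lemma: at least `k` of the `m` values have fewer than `k`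
values strictly below them. -/
lemma count_rank_le {m k : ℕ} (hk : k ≤ m) (g : Fin m → ℝ) :
    k ≤ (Finset.univ.filter
      (fun j => (Finset.univ.filter (fun i => g i < g j)).card < k)).card := by
  rcases Nat.eq_zero_or_pos k with rfl | hkpos
  · exact Nat.zero_le _
  set σ := Tuple.sort g with hσ
  have hmono := Tuple.monotone_sort g
  -- rank bound at a sorted position
  have hrank : ∀ l : Fin m, (Finset.univ.filter (fun i => g i < g (σ l))).card ≤ (l : ℕ) := by
    intro l
    have himg : Finset.univ.filter (fun i => g i < g (σ l)) =
        Finset.image σ (Finset.univ.filter (fun i => g (σ i) < g (σ l))) := by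
      ext i
      simp only [Finset.mem_filter, Finset.mem_univ, true_and, Finset.mem_image]
      constructor
      · intro hi
        exact ⟨σ.symm i, by simpa using hi, by simp⟩
      · rintro ⟨a, ha, rfl⟩
        exact ha
    have hsubset : Finset.univ.filter (fun i => g (σ i) < g (σ l)) ⊆ Finset.Iio l := by
      intro i hi
      simp only [Finset.mem_filter, Finset.mem_univ, true_and] at hi
      rw [Finset.mem_Iio]
      by_contra hcon
      push_neg at hcon
      exact absurd (hmono hcon) (not_le.mpr hi)
    calc (Finset.univ.filter (fun i => g i < g (σ l))).card
        = (Finset.univ.filter (fun i => g (σ i) < g (σ l))).card := by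
          rw [himg, Finset.card_image_of_injective _ σ.injective]
      _ ≤ (Finset.Iio l).card := Finset.card_le_card hsubset
      _ = (l : ℕ) := Fin.card_Iio l
  -- injection from Fin k
  have := Finset.card_le_card_of_injOn (f := fun a : Fin k => σ (Fin.castLE hk a))
    (s := Finset.univ)
    (t := Finset.univ.filter
      (fun j => (Finset.univ.filter (fun i => g i < g j)).card < k)) ?_ ?_
  · simpa using this
  · intro a _
    simp only [Finset.mem_coe, Finset.mem_filter, Finset.mem_univ, true_and]
    calc (Finset.univ.filter (fun i => g i < g (σ (Fin.castLE hk a)))).card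
        ≤ ((Fin.castLE hk a : Fin m) : ℕ) := hrank _
      _ = (a : ℕ) := rfl
      _ < k := a.isLt
  · intro a _ b _ hab
    have := σ.injective hab
    exact Fin.castLE_injective hk this

/-- The joint law of independent random variables is the product of the marginals. -/
lemma map_fun_eq_pi {Ω : Type*} [MeasurableSpace Ω] (P : Measure Ω) [IsProbabilityMeasure P]
    {m : ℕ} (Z : Fin m → Ω → ℝ) (hZm : ∀ i, Measurable (Z i))
    (hZi : iIndepFun Z P) :
    P.map (fun ω i => Z i ω) = Measure.pi (fun i => P.map (Z i)) := by
  refine (Measure.pi_eq fun s hs => ?_).symm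
  rw [Measure.map_apply (measurable_pi_lambda _ fun i => hZm i) (MeasurableSet.univ_pi hs)]
  have hpre : (fun ω i => Z i ω) ⁻¹' (Set.pi Set.univ s) =
      ⋂ i ∈ (Finset.univ : Finset (Fin m)), Z i ⁻¹' s i := by
    ext ω; simp [Set.mem_pi]
  rw [hpre, hZi.measure_inter_preimage_eq_mul Finset.univ (fun i _ => hs i)]
  exact Finset.prod_congr rfl fun i _ => (Measure.map_apply (hZm i) (hs i)).symm

/-- The product of identical probability measures is invariant under permuting coordinates. -/
lemma pi_map_comp_perm {m : ℕ} (μ : Measure ℝ) [IsProbabilityMeasure μ]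
    (e : Equiv.Perm (Fin m)) :
    (Measure.pi (fun _ : Fin m => μ)).map (fun v i => v (e i)) =
      Measure.pi (fun _ : Fin m => μ) := by
  refine (Measure.pi_eq fun s hs => ?_).symm
  rw [Measure.map_apply (f := fun (v : Fin m → ℝ) i => v (e i))
    (measurable_pi_lambda _ fun i => measurable_pi_apply _)
    (MeasurableSet.univ_pi hs)]
  have hpre : (fun (v : Fin m → ℝ) i => v (e i)) ⁻¹' (Set.pi Set.univ s) =
      Set.pi Set.univ (fun i => s (e.symm i)) := by
    ext v
    simp only [Set.mem_preimage, Set.mem_pi, Set.mem_univ, forall_true_left, true_implies]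
    constructor
    · intro h i
      simpa using h (e.symm i)
    · intro h i
      simpa using h (e i)
  rw [hpre, Measure.pi_pi]
  exact Equiv.prod_comp e.symm fun i => μ (s i)

/-- Split conformal prediction coverage guarantee: for i.i.d. scores
`Z₀, …, Z_{n-1}, Z_n`, letting `q̂` be the `⌈(n+1)(1-α)⌉`-th smallest of the first `n`
(calibration) scores, the fresh score `Z_n` satisfies `Z_n ≤ q̂` with probability
at least `1 - α`. -/
theorem stmt2 {Ω : Type*} [MeasurableSpace Ω] (P : Measure Ω) [IsProbabilityMeasure P]
    (n : ℕ) (hn : 0 < n)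
    (Z : Fin (n + 1) → Ω → ℝ) (hZm : ∀ i, Measurable (Z i))
    (hZi : iIndepFun Z P)
    (hZid : ∀ i j, IdentDistrib (Z i) (Z j) P P)
    (α : ℝ) (hα : α ∈ Set.Ioo (0:ℝ) 1)
    (hk : ⌈((n : ℝ) + 1) * (1 - α)⌉₊ ≤ n) :
    ENNReal.ofReal (1 - α) ≤
      P {ω | Z (Fin.last n) ω ≤
        kthSmallest n (fun i : Fin n => Z i.castSucc ω) ⌈((n : ℝ) + 1) * (1 - α)⌉₊} := by
  set k : ℕ := ⌈((n : ℝ) + 1) * (1 - α)⌉₊ with hkdef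
  set W : Ω → (Fin (n+1) → ℝ) := fun ω i => Z i ω with hWdef
  have hWmeas : Measurable W := measurable_pi_lambda _ fun i => hZm i
  set S : Fin (n+1) → Set (Fin (n+1) → ℝ) :=
    fun j => {v | (Finset.univ.filter (fun i => v i < v j)).card < k} with hSdef
  -- measurability of the rank sets
  have hNmeas : ∀ j : Fin (n+1),
      Measurable (fun v : Fin (n+1) → ℝ => (Finset.univ.filter (fun i => v i < v j)).card) := by
    intro j
    have : (fun v : Fin (n+1) → ℝ => (Finset.univ.filter (fun i => v i < v j)).card) =
        fun v => ∑ i : Fin (n+1), if v i < v j then 1 else 0 := by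
      funext v
      rw [Finset.card_filter]
    rw [this]
    exact Finset.measurable_sum _ fun i _ =>
      Measurable.ite (measurableSet_lt (measurable_pi_apply i) (measurable_pi_apply j))
        measurable_const measurable_const
  have hSmeas : ∀ j, MeasurableSet (S j) := by
    intro j
    exact (hNmeas j) (MeasurableSet.of_discrete (s := Set.Iio k))
  -- the joint law
  set μ : Measure ℝ := P.map (Z (Fin.last n)) with hμdef
  have hμprob : IsProbabilityMeasure μ := Measure.isProbabilityMeasure_map (hZm (Fin.last n)).aemeasurable
  have hlaw : P.map W = Measure.pi (fun _ : Fin (n+1) => μ) := by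
    rw [hWdef, map_fun_eq_pi P Z hZm hZi]
    congr 1
    funext i
    exact (hZid i (Fin.last n)).map_eq
  -- exchangeability: all rank events have the same probability
  have hswap : ∀ j : Fin (n+1), Measure.pi (fun _ : Fin (n+1) => μ) (S j) =
      Measure.pi (fun _ : Fin (n+1) => μ) (S (Fin.last n)) := by
    intro j
    set e : Equiv.Perm (Fin (n+1)) := Equiv.swap j (Fin.last n) with hedef
    have hinv := pi_map_comp_perm μ e
    have hpre : (fun (v : Fin (n+1) → ℝ) i => v (e i)) ⁻¹' (S (Fin.last n)) = S j := by
      ext v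
      simp only [Set.mem_preimage, hSdef, Set.mem_setOf_eq]
      have he_last : e (Fin.last n) = j := by simp [hedef, Equiv.swap_apply_right]
      have hcount : (Finset.univ.filter (fun i => v (e i) < v (e (Fin.last n)))).card =
          (Finset.univ.filter (fun i => v i < v j)).card := by
        rw [he_last, Finset.card_filter, Finset.card_filter]
        exact Equiv.sum_comp e (fun i => if v i < v j then 1 else 0)
      rw [hcount]
    calc Measure.pi (fun _ : Fin (n+1) => μ) (S j)
        = Measure.pi (fun _ : Fin (n+1) => μ)
            ((fun (v : Fin (n+1) → ℝ) i => v (e i)) ⁻¹' (S (Fin.last n))) := by rw [hpre]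
      _ = ((Measure.pi (fun _ : Fin (n+1) => μ)).map (fun v i => v (e i)))
            (S (Fin.last n)) := by
          rw [Measure.map_apply (f := fun (v : Fin (n+1) → ℝ) i => v (e i))
            (measurable_pi_lambda _ fun i => measurable_pi_apply _) (hSmeas _)]
      _ = Measure.pi (fun _ : Fin (n+1) => μ) (S (Fin.last n)) := by rw [hinv]
  have hPW : ∀ j : Fin (n+1), P (W ⁻¹' S j) = Measure.pi (fun _ : Fin (n+1) => μ) (S j) := by
    intro j
    rw [← hlaw, Measure.map_apply hWmeas (hSmeas j)]
  -- the sum over j of the probabilities is at least k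
  have hsum : (k : ENNReal) ≤ ∑ j : Fin (n+1), P (W ⁻¹' S j) := by
    have heq : ∀ j : Fin (n+1), P (W ⁻¹' S j) =
        ∫⁻ ω, (W ⁻¹' S j).indicator (fun _ => (1 : ENNReal)) ω ∂P := by
      intro j
      rw [lintegral_indicator_const (hWmeas (hSmeas j))]
      simp
    calc (k : ENNReal) = ∫⁻ _, (k : ENNReal) ∂P := by simp
      _ ≤ ∫⁻ ω, ∑ j : Fin (n+1), (W ⁻¹' S j).indicator (fun _ => (1 : ENNReal)) ω ∂P := by
          apply lintegral_mono
          intro ω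
          show (k : ENNReal) ≤
            ∑ j : Fin (n+1), (W ⁻¹' S j).indicator (fun _ => (1 : ENNReal)) ω
          have hpt := count_rank_le (m := n+1) (k := k)
            (by omega : k ≤ n+1) (W ω)
          have : ∑ j : Fin (n+1), (W ⁻¹' S j).indicator (fun _ => (1 : ENNReal)) ω =
              ((Finset.univ.filter (fun j : Fin (n+1) =>
                (Finset.univ.filter (fun i => W ω i < W ω j)).card < k)).card : ENNReal) := by
            rw [Finset.card_filter]
            push_cast
            apply Finset.sum_congr rfl
            intro j _
            by_cases hj : ω ∈ W ⁻¹' S j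
            · have hj' : (Finset.univ.filter (fun i => W ω i < W ω j)).card < k := hj
              simp [Set.indicator_of_mem hj, hj']
            · have hj' : ¬ (Finset.univ.filter (fun i => W ω i < W ω j)).card < k := hj
              simp [Set.indicator_of_notMem hj, hj']
          rw [this]
          exact_mod_cast Nat.cast_le.mpr hpt
      _ = ∑ j : Fin (n+1), ∫⁻ ω, (W ⁻¹' S j).indicator (fun _ => (1 : ENNReal)) ω ∂P := by
          rw [lintegral_finset_sum]
          intro j _
          exact (measurable_const.indicator (hWmeas (hSmeas j)))
      _ = ∑ j : Fin (n+1), P (W ⁻¹' S j) := by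
          exact Finset.sum_congr rfl fun j _ => (heq j).symm
  -- all terms equal, so (n+1) * P(B) ≥ k
  have hsum_eq : ∑ j : Fin (n+1), P (W ⁻¹' S j) =
      ((n+1 : ℕ) : ENNReal) * P (W ⁻¹' S (Fin.last n)) := by
    have hall : ∀ j : Fin (n+1), P (W ⁻¹' S j) = P (W ⁻¹' S (Fin.last n)) := by
      intro j
      rw [hPW j, hPW (Fin.last n), hswap j]
    rw [Finset.sum_congr rfl fun j _ => hall j]
    simp [mul_comm]
  have hmain : (k : ENNReal) ≤ ((n+1 : ℕ) : ENNReal) * P (W ⁻¹' S (Fin.last n)) := by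
    rw [← hsum_eq]; exact hsum
  -- inclusion into the target event
  have hincl : W ⁻¹' S (Fin.last n) ⊆
      {ω | Z (Fin.last n) ω ≤
        kthSmallest n (fun i : Fin n => Z i.castSucc ω) k} := by
    intro ω hω
    have hω' : (Finset.univ.filter
        (fun i : Fin (n+1) => Z i ω < Z (Fin.last n) ω)).card < k := hω
    have hle : (Finset.univ.filter
        (fun i : Fin n => Z i.castSucc ω < Z (Fin.last n) ω)).card ≤
        (Finset.univ.filter (fun i : Fin (n+1) => Z i ω < Z (Fin.last n) ω)).card := by
      apply Finset.card_le_card_of_injOn (fun i => Fin.castSucc i)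
      · intro i hi
        simp only [Finset.mem_coe, Finset.mem_filter, Finset.mem_univ, true_and] at hi ⊢
        exact hi
      · intro a _ b _ hab
        exact Fin.castSucc_injective n hab
    exact le_kthSmallest_of_count_lt hn hk _ _ (lt_of_le_of_lt hle hω')
  -- final arithmetic
  have hkreal : ((n : ℝ) + 1) * (1 - α) ≤ (k : ℝ) := Nat.le_ceil _
  have hmne : ((n+1 : ℕ) : ENNReal) ≠ 0 := by simp
  have hmnetop : ((n+1 : ℕ) : ENNReal) ≠ ⊤ := ENNReal.natCast_ne_top (n+1)
  have hdiv : (k : ENNReal) / ((n+1 : ℕ) : ENNReal) ≤ P (W ⁻¹' S (Fin.last n)) := by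
    rw [ENNReal.div_le_iff_le_mul (Or.inl hmne) (Or.inl hmnetop)]
    calc (k : ENNReal) ≤ ((n+1 : ℕ) : ENNReal) * P (W ⁻¹' S (Fin.last n)) := hmain
      _ = P (W ⁻¹' S (Fin.last n)) * ((n+1 : ℕ) : ENNReal) := mul_comm _ _
  have hofreal : ENNReal.ofReal (1 - α) ≤ (k : ENNReal) / ((n+1 : ℕ) : ENNReal) := by
    rw [ENNReal.le_div_iff_mul_le (Or.inl hmne) (Or.inl hmnetop)]
    calc ENNReal.ofReal (1 - α) * ((n+1 : ℕ) : ENNReal)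
        = ENNReal.ofReal ((1 - α) * ((n+1 : ℕ) : ℝ)) := by
          rw [ENNReal.ofReal_mul (by linarith [hα.2] : (0:ℝ) ≤ 1 - α)]
          congr 1
          exact (ENNReal.ofReal_natCast (n+1)).symm
      _ ≤ ENNReal.ofReal (k : ℝ) := by
          apply ENNReal.ofReal_le_ofReal
          have hcast : (((n+1 : ℕ)) : ℝ) = (n : ℝ) + 1 := by push_cast; ring
          rw [hcast, mul_comm]
          exact hkreal
      _ = (k : ENNReal) := ENNReal.ofReal_natCast k
  have hfinal : ENNReal.ofReal (1 - α) ≤ P (W ⁻¹' S (Fin.last n)) :=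
    le_trans hofreal hdiv
  calc ENNReal.ofReal (1 - α) ≤ P (W ⁻¹' S (Fin.last n)) := hfinal
    _ ≤ P {ω | Z (Fin.last n) ω ≤
        kthSmallest n (fun i : Fin n => Z i.castSucc ω) k} := measure_mono hincl
end
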